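/- Let α ∈ [0, 1/2] and let s be defined by 1/s = 1 + α. Let X be a complex Banach space for which there exists a constant C > 0 such that for every ε > 0, every natural number n, and every n-dimensional subspace E of X there is a finite-rank bounded operator R on X with ‖R‖ ≤ C·n^α and ‖Rx − x‖ ≤ ε‖x‖ for all x ∈ E. Then X has the approximation property AP_{(s,1)} in the following sense: whenever (λ_k) is a sequence in the Lorentz space l_{(s,1)}, (x'_k) is a bounded sequence in X*, (x_k) is a bounded sequence in X, and Σ_k λ_k x'_k(x) x_k = 0 for every x ∈ X, then Σ_k λ_k ⟨U x_k, x'_k⟩ = 0 for every bounded linear operator U : X → X** (here ⟨U x_k, x'_k⟩ denotes the evaluation of the bidual element U x_k at the functional x'_k). -/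

import Mathlib

open Filter
open scoped Topology

/-- The decreasing rearrangement of a scalar sequence, `0`-indexed:
`decRearrange a n = a*_{n+1} = inf_{|J| ≤ n} sup_{j ∉ J} ‖a j‖`. -/
noncomputable def decRearrange (a : ℕ → ℂ) (n : ℕ) : ℝ :=
  sInf {c : ℝ | ∃ J : Finset ℕ, J.card ≤ n ∧ ∀ j ∉ J, ‖a j‖ ≤ c}

/-- The `n`-th summand `(a*_{n+1})^v (n+1)^{v/u - 1}` in the Lorentz `l_{(u,v)}`-norm. -/
noncomputable def lorentzSummand (u v : ℝ) (a : ℕ → ℂ) (n : ℕ) : ℝ :=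
  decRearrange a n ^ v * ((n : ℝ) + 1) ^ (v / u - 1)

/-- Membership in the Lorentz sequence space `l_{(u,v)}` (`0 < v < ∞`). -/
def MemLorentz (u v : ℝ) (a : ℕ → ℂ) : Prop :=
  Tendsto (fun n => ‖a n‖) atTop (𝓝 0) ∧ Summable (lorentzSummand u v a)


variable {a : ℕ → ℂ}

lemma decSet_nonempty (ha : Tendsto (fun n => ‖a n‖) atTop (𝓝 0)) (n : ℕ) :
    {c : ℝ | ∃ J : Finset ℕ, J.card ≤ n ∧ ∀ j ∉ J, ‖a j‖ ≤ c}.Nonempty := by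
  obtain ⟨N, hN⟩ := (ha.eventually (eventually_le_nhds (by norm_num : (0:ℝ) < 1))).exists_forall_of_atTop
  refine ⟨((insert 0 (Finset.range N)).sup' ⟨0, Finset.mem_insert_self _ _⟩ (fun j => ‖a j‖)) ⊔ 1,
    ∅, by simp, fun j _ => ?_⟩
  rcases lt_or_ge j N with h | h
  · exact le_sup_of_le_left
      (Finset.le_sup' (fun j => ‖a j‖) (Finset.mem_insert_of_mem (α := ℕ) (s := Finset.range N) (b := 0) (Finset.mem_range.2 h)))
  · exact le_sup_of_le_right (hN j h)

lemma decSet_bddBelow (n : ℕ) :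
    BddBelow {c : ℝ | ∃ J : Finset ℕ, J.card ≤ n ∧ ∀ j ∉ J, ‖a j‖ ≤ c} := by
  refine ⟨0, fun c hc => ?_⟩
  obtain ⟨J, _, hJ⟩ := hc
  obtain ⟨j, -, hj⟩ := (Set.Infinite.exists_notMem_finset (Set.infinite_univ (α := ℕ)) J)
  exact le_trans (norm_nonneg _) (hJ j hj)

lemma decRearrange_nonneg (ha : Tendsto (fun n => ‖a n‖) atTop (𝓝 0)) (n : ℕ) :
    0 ≤ decRearrange a n := by
  refine le_csInf (decSet_nonempty ha n) fun c hc => ?_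
  obtain ⟨J, _, hJ⟩ := hc
  obtain ⟨j, -, hj⟩ := (Set.Infinite.exists_notMem_finset (Set.infinite_univ (α := ℕ)) J)
  exact le_trans (norm_nonneg _) (hJ j hj)

/-- if `m+1` indices all have value `≥ v`, then `v ≤ a* m`. -/
lemma le_decRearrange (ha : Tendsto (fun n => ‖a n‖) atTop (𝓝 0)) {G : Finset ℕ} {m : ℕ}
    {v : ℝ} (hcard : m < G.card) (hv : ∀ j ∈ G, v ≤ ‖a j‖) : v ≤ decRearrange a m := by
  refine le_csInf (decSet_nonempty ha m) fun c hc => ?_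
  obtain ⟨J, hJcard, hJ⟩ := hc
  have hne : (G \ J).Nonempty := by
    rw [← Finset.card_pos]
    have h1 := Finset.le_card_sdiff J G
    omega
  obtain ⟨j, hj⟩ := hne
  rw [Finset.mem_sdiff] at hj
  exact le_trans (hv j hj.1) (hJ j hj.2)

/-- argmax outside any finite set exists. -/
lemma exists_argmax (ha : Tendsto (fun n => ‖a n‖) atTop (𝓝 0)) (J : Finset ℕ) :
    ∃ k ∉ J, ∀ k' ∉ J, ‖a k'‖ ≤ ‖a k‖ := by
  obtain ⟨k₁, -, hk₁⟩ := (Set.Infinite.exists_notMem_finset (Set.infinite_univ (α := ℕ)) J)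
  by_cases hz : ∀ k ∉ J, ‖a k‖ ≤ ‖a k₁‖
  · exact ⟨k₁, hk₁, hz⟩
  push_neg at hz
  obtain ⟨k₂, hk₂J, hk₂⟩ := hz
  have hpos : 0 < ‖a k₂‖ := lt_of_le_of_lt (norm_nonneg _) hk₂
  obtain ⟨N, hN⟩ := (ha.eventually (eventually_lt_nhds hpos)).exists_forall_of_atTop
  set F := ((Finset.range N).filter (fun j => j ∉ J)) ∪ {k₂} with hF
  have hk₂F : k₂ ∈ F := Finset.mem_union_right _ (Finset.mem_singleton_self _)
  obtain ⟨k₀, hk₀F, hk₀⟩ := F.exists_max_image (fun j => ‖a j‖) ⟨k₂, hk₂F⟩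
  have hk₀J : k₀ ∉ J := by
    rcases Finset.mem_union.1 hk₀F with h | h
    · exact (Finset.mem_filter.1 h).2
    · rw [Finset.mem_singleton.1 h]; exact hk₂J
  refine ⟨k₀, hk₀J, fun k hk => ?_⟩
  rcases lt_or_ge k N with h | h
  · exact hk₀ k (Finset.mem_union_left _ (Finset.mem_filter.2 ⟨Finset.mem_range.2 h, hk⟩))
  · exact le_trans (hN k h).le (hk₀ k₂ hk₂F)

lemma exists_top_finset (ha : Tendsto (fun n => ‖a n‖) atTop (𝓝 0)) (n : ℕ) :
    ∃ J : Finset ℕ, J.card = n ∧ ∀ k ∉ J, ∀ j ∈ J, ‖a k‖ ≤ ‖a j‖ := by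
  induction n with
  | zero => exact ⟨∅, rfl, by simp⟩
  | succ n ih =>
    obtain ⟨J, hcard, htop⟩ := ih
    obtain ⟨k₀, hk₀J, hk₀⟩ := exists_argmax ha J
    refine ⟨insert k₀ J, by rw [Finset.card_insert_of_notMem hk₀J, hcard], ?_⟩
    intro k hk j hj
    have hkJ : k ∉ J := fun h => hk (Finset.mem_insert_of_mem h)
    rcases Finset.mem_insert.1 hj with h | h
    · rw [h]; exact hk₀ k hkJ
    · exact htop k hkJ j h

lemma sum_compl_le_sum_decRearrange (ha : Tendsto (fun n => ‖a n‖) atTop (𝓝 0)) {n : ℕ}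
    {J : Finset ℕ} (hcard : J.card = n) (htop : ∀ k ∉ J, ∀ j ∈ J, ‖a k‖ ≤ ‖a j‖)
    (F : Finset ℕ) (hdisj : Disjoint F J) :
    ∑ k ∈ F, ‖a k‖ ≤ ∑ i ∈ Finset.Ico n (n + F.card), decRearrange a i := by
  generalize hT : F.card = t
  induction t generalizing F with
  | zero =>
    rw [Finset.card_eq_zero.1 hT]
    simp
  | succ t ih =>
    obtain ⟨k, hkF, hkmin⟩ := F.exists_min_image (fun j => ‖a j‖)
      (Finset.card_pos.1 (by omega))
    have hFk : (F.erase k).card = t := by rw [Finset.card_erase_of_mem hkF, hT]; omega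
    have hak : ‖a k‖ ≤ decRearrange a (n + t) := by
      refine le_decRearrange ha (G := J ∪ F) ?_ ?_
      · rw [Finset.card_union_of_disjoint hdisj.symm, hcard, hT]; omega
      · intro j hj
        rcases Finset.mem_union.1 hj with h | h
        · exact htop k (Finset.disjoint_left.1 hdisj hkF) j h
        · exact hkmin j h
    calc ∑ j ∈ F, ‖a j‖ = ∑ j ∈ F.erase k, ‖a j‖ + ‖a k‖ := by
          rw [Finset.sum_erase_add _ _ hkF]
      _ ≤ ∑ i ∈ Finset.Ico n (n + t), decRearrange a i + decRearrange a (n + t) := by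
          refine add_le_add (ih _ (hdisj.mono_left (Finset.erase_subset _ _)) hFk) hak
      _ = ∑ i ∈ Finset.Ico n (n + (t+1)), decRearrange a i := by
          rw [← Finset.sum_Ico_succ_top (by omega)]
          ring_nf
open Filter
open scoped Topology

lemma finrank_trace_zero {X : Type*} [NormedAddCommGroup X] [NormedSpace ℂ X] [CompleteSpace X]
    (lam : ℕ → ℂ) (x' : ℕ → X →L[ℂ] ℂ) (x : ℕ → X)
    (hSlam : Summable (fun k => ‖lam k‖))
    (Mx : ℝ) (hMx0 : 0 ≤ Mx) (hMx : ∀ k, ‖x k‖ ≤ Mx)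
    (M' : ℝ) (hM'0 : 0 ≤ M') (hM' : ∀ k, ‖x' k‖ ≤ M')
    (hzero : ∀ y : X, ∑' k, (lam k * (x' k) y) • x k = 0)
    (U : X →L[ℂ] ((X →L[ℂ] ℂ) →L[ℂ] ℂ))
    (R : X →L[ℂ] X) (hR : FiniteDimensional ℂ (LinearMap.range (R : X →ₗ[ℂ] X))) :
    ∑' k, lam k * (U (R (x k))) (x' k) = 0 := by
  haveI := hR
  set V := LinearMap.range (R : X →ₗ[ℂ] X) with hV
  let b : Module.Basis (Fin (Module.finrank ℂ V)) ℂ V := Module.finBasis ℂ V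
  let Rres : X →L[ℂ] V := R.codRestrict V (fun v => LinearMap.mem_range_self _ v)
  let φ : Fin (Module.finrank ℂ V) → (X →L[ℂ] ℂ) :=
    fun j => (LinearMap.toContinuousLinearMap (b.coord j)).comp Rres
  have hφ : ∀ j y, φ j y = b.repr (Rres y) j := by
    intro j y
    simp [φ, Module.Basis.coord_apply]
  have hφMx : ∀ j k, ‖φ j (x k)‖ ≤ ‖φ j‖ * Mx := by
    intro j k
    refine le_trans ((φ j).le_opNorm _) ?_
    exact mul_le_mul_of_nonneg_left (hMx k) (norm_nonneg _)
  have hRdecomp : ∀ y : X, R y = ∑ j, φ j y • ((b j : V) : X) := by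
    intro y
    have h1 : R y = ((Rres y : V) : X) := rfl
    rw [h1, ← b.sum_repr (Rres y)]
    push_cast
    refine Finset.sum_congr rfl fun j _ => by rw [hφ]
  have hsummand : ∀ k, lam k * (U (R (x k))) (x' k)
      = ∑ j, (lam k * φ j (x k)) * (U ((b j : V) : X)) (x' k) := by
    intro k
    rw [hRdecomp (x k), map_sum, ContinuousLinearMap.sum_apply, Finset.mul_sum]
    refine Finset.sum_congr rfl fun j _ => ?_
    rw [map_smul, ContinuousLinearMap.smul_apply]
    simp only [smul_eq_mul]; ring
  have hsummable : ∀ j : Fin (Module.finrank ℂ V), Summable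
      (fun k => (lam k * φ j (x k)) * (U ((b j : V) : X)) (x' k)) := by
    intro j
    refine Summable.of_norm_bounded (g :=
      (fun k => ‖lam k‖ * (‖φ j‖ * Mx) * (‖U ((b j : V) : X)‖ * M'))) ((hSlam.mul_right _).mul_right _) ?_
    intro k
    rw [norm_mul, norm_mul]
    have h2 : ‖(U ((b j : V) : X)) (x' k)‖ ≤ ‖U ((b j : V) : X)‖ * M' :=
      le_trans ((U _).le_opNorm _) (mul_le_mul_of_nonneg_left (hM' k) (norm_nonneg _))
    refine mul_le_mul (mul_le_mul le_rfl (hφMx j k) (norm_nonneg _) (norm_nonneg _)) h2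
      (norm_nonneg _) (mul_nonneg (norm_nonneg _) (mul_nonneg (norm_nonneg _) hMx0))
  have hjzero : ∀ j : Fin (Module.finrank ℂ V),
      ∑' k, (lam k * φ j (x k)) * (U ((b j : V) : X)) (x' k) = 0 := by
    intro j
    have hSv : Summable (fun k => (lam k * φ j (x k)) • x' k) := by
      refine Summable.of_norm_bounded (g :=
        (fun k => ‖lam k‖ * (‖φ j‖ * Mx) * M')) ((hSlam.mul_right _).mul_right _) ?_
      intro k
      rw [norm_smul (lam k * φ j (x k)) (x' k), norm_mul]
      refine mul_le_mul (mul_le_mul le_rfl (hφMx j k) (norm_nonneg _) (norm_nonneg _)) (hM' k)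
        (norm_nonneg _) (mul_nonneg (norm_nonneg _) (mul_nonneg (norm_nonneg _) hMx0))
    have hψ : ∑' k, (lam k * φ j (x k)) • x' k = 0 := by
      refine ContinuousLinearMap.ext fun y => ?_
      have hev : (∑' k, (lam k * φ j (x k)) • x' k) y
          = ∑' k, ((lam k * φ j (x k)) • x' k) y := by
        simpa using (ContinuousLinearMap.apply ℂ ℂ y).map_tsum hSv
      rw [hev, ContinuousLinearMap.zero_apply]
      have hSy : Summable (fun k => (lam k * (x' k) y) • x k) := by
        refine Summable.of_norm_bounded (g :=
          (fun k => ‖lam k‖ * (M' * ‖y‖) * Mx)) ((hSlam.mul_right _).mul_right _) ?_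
        intro k
        rw [norm_smul (lam k * (x' k) y) (x k), norm_mul]
        have h1 : ‖(x' k) y‖ ≤ M' * ‖y‖ :=
          le_trans ((x' k).le_opNorm _) (mul_le_mul_of_nonneg_right (hM' k) (norm_nonneg _))
        refine mul_le_mul (mul_le_mul le_rfl h1 (norm_nonneg _) (norm_nonneg _)) (hMx k)
          (norm_nonneg _) (mul_nonneg (norm_nonneg _) (mul_nonneg hM'0 (norm_nonneg _)))
      have hφ0 := (φ j).map_tsum hSy
      rw [hzero y, map_zero] at hφ0
      calc ∑' k, ((lam k * φ j (x k)) • x' k) y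
          = ∑' k, (φ j) ((lam k * (x' k) y) • x k) := by
            refine tsum_congr fun k => ?_
            rw [ContinuousLinearMap.smul_apply, map_smul]
            simp only [smul_eq_mul]; ring
        _ = 0 := hφ0.symm
    calc ∑' k, (lam k * φ j (x k)) * (U ((b j : V) : X)) (x' k)
        = (U ((b j : V) : X)) (∑' k, (lam k * φ j (x k)) • x' k) := by
          rw [(U ((b j : V) : X)).map_tsum hSv]
          exact tsum_congr fun k => by rw [map_smul, smul_eq_mul]
      _ = 0 := by rw [hψ, map_zero]
  calc ∑' k, lam k * (U (R (x k))) (x' k)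
      = ∑' k, ∑ j, (lam k * φ j (x k)) * (U ((b j : V) : X)) (x' k) :=
        tsum_congr hsummand
    _ = ∑ j, ∑' k, (lam k * φ j (x k)) * (U ((b j : V) : X)) (x' k) :=
        Summable.tsum_finsetSum fun j _ => hsummable j
    _ = 0 := by simp [hjzero]

set_option maxHeartbeats 1000000 in
/-- if `0 ≤ α ≤ 1/2`, `1/s = 1 + α` and the complex Banach space `X`
admits, for every `ε > 0` and every `n`-dimensional subspace `E`, a finite-rank
operator `R` with `‖R‖ ≤ C n^α` and `‖Rx - x‖ ≤ ε‖x‖` on `E`, then `X` has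
`AP_{(s,1)}`: any tensor element `∑ λ_k x'_k ⊗ x_k` (with `(λ_k) ∈ l_{(s,1)}`,
`(x'_k)` bounded in `X*`, `(x_k)` bounded in `X`) inducing the zero operator
has vanishing generalized trace against every `U : X → X**`. -/
theorem ap_s1_of_uniform_approximation (α s : ℝ) (hα0 : 0 ≤ α) (hα1 : α ≤ 1 / 2)
    (hs : 1 / s = 1 + α)
    (X : Type*) [NormedAddCommGroup X] [NormedSpace ℂ X] [CompleteSpace X]
    (C : ℝ) (hC : 0 < C)
    (happrox : ∀ ε > (0 : ℝ), ∀ n : ℕ, ∀ E : Submodule ℂ X, FiniteDimensional ℂ E →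
      Module.finrank ℂ E = n →
      ∃ R : X →L[ℂ] X, FiniteDimensional ℂ (LinearMap.range (R : X →ₗ[ℂ] X)) ∧
        ‖R‖ ≤ C * (n : ℝ) ^ α ∧ ∀ x ∈ E, ‖R x - x‖ ≤ ε * ‖x‖)
    (lam : ℕ → ℂ) (hlam : MemLorentz s 1 lam)
    (x' : ℕ → X →L[ℂ] ℂ) (hx' : ∃ M, ∀ k, ‖x' k‖ ≤ M)
    (x : ℕ → X) (hx : ∃ M, ∀ k, ‖x k‖ ≤ M)
    (hzero : ∀ y : X, ∑' k, (lam k * (x' k) y) • x k = 0)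
    (U : X →L[ℂ] ((X →L[ℂ] ℂ) →L[ℂ] ℂ)) :
    ∑' k, lam k * (U (x k)) (x' k) = 0 := by
    classical
  obtain ⟨h0, hsumm⟩ := hlam
  obtain ⟨Mx₀, hMx₀⟩ := hx
  obtain ⟨M'₀, hM'₀⟩ := hx'
  set Mx := max Mx₀ 0 with hMxdef
  set M' := max M'₀ 0 with hM'def
  have hMx : ∀ k, ‖x k‖ ≤ Mx := fun k => le_trans (hMx₀ k) (le_max_left _ _)
  have hM' : ∀ k, ‖x' k‖ ≤ M' := fun k => le_trans (hM'₀ k) (le_max_left _ _)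
  have hMx0 : 0 ≤ Mx := le_max_right _ _
  have hM'0 : 0 ≤ M' := le_max_right _ _
  -- a bound for U (operator norm is not directly available for instance reasons)
  obtain ⟨CU, hCU0, hCU⟩ : ∃ c : ℝ, 0 ≤ c ∧ ∀ y : X, ‖U y‖ ≤ c * ‖y‖ := by
    have hUc : @Continuous X ((X →L[ℂ] ℂ) →L[ℂ] ℂ) _
        (@UniformSpace.toTopologicalSpace _ (@PseudoMetricSpace.toUniformSpace _
          (@SeminormedAddGroup.toPseudoMetricSpace _ SeminormedAddCommGroup.toSeminormedAddGroup)))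
        (fun y => U y) := U.cont
    obtain ⟨δ, hδ, hball⟩ := Metric.continuous_iff.1 hUc 0 1 one_pos
    refine ⟨2/δ, by positivity, fun y => ?_⟩
    rcases eq_or_ne y 0 with rfl | hy
    · have hz : ‖U (0:X)‖ = 0 := by rw [map_zero]; exact @norm_zero ((X →L[ℂ] ℂ) →L[ℂ] ℂ) _
      rw [hz]; positivity
    · have hy' : 0 < ‖y‖ := norm_pos_iff.2 hy
      set t : ℝ := δ / (2 * ‖y‖) with htdef
      have ht : 0 < t := by positivity
      have hsm : ‖(t:ℂ) • y‖ = t * ‖y‖ := by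
        rw [norm_smul, Complex.norm_real, Real.norm_eq_abs, abs_of_pos ht]
      have hval : t * ‖y‖ = δ / 2 := by rw [htdef]; field_simp
      have hlt : dist ((t:ℂ) • y) 0 < δ := by
        rw [dist_zero_right, hsm, hval]; linarith
      have h1 : ‖U ((t:ℂ) • y)‖ < 1 := by
        have h2 := hball ((t:ℂ) • y) hlt
        rw [map_zero] at h2
        exact (dist_zero_right (U ((t:ℂ) • y))).symm.trans_lt h2
      refine ContinuousLinearMap.opNorm_le_bound _ (by positivity) (fun f => ?_)
      have htne : (t:ℂ) ≠ 0 := by exact_mod_cast ht.ne'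
      have hev : (U y) f = (1/(t:ℂ)) * ((U ((t:ℂ) • y)) f) := by
        rw [map_smul, ContinuousLinearMap.smul_apply, smul_eq_mul]
        field_simp
      rw [hev, norm_mul]
      have h3 : ‖(U ((t:ℂ) • y)) f‖ ≤ 1 * ‖f‖ :=
        le_trans ((U _).le_opNorm f) (mul_le_mul_of_nonneg_right h1.le (norm_nonneg f))
      have h4 : ‖(1/(t:ℂ))‖ = 1/t := by
        rw [norm_div, norm_one, Complex.norm_real, Real.norm_eq_abs, abs_of_pos ht]
      rw [h4]
      have h5 : 1/t * ‖(U ((t:ℂ) • y)) f‖ ≤ 1/t * (1 * ‖f‖) :=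
        mul_le_mul_of_nonneg_left h3 (by positivity)
      refine le_trans h5 ?_
      have h6 : 1/t = 2/δ * ‖y‖ := by rw [htdef]; field_simp
      rw [h6]
      exact le_of_eq (by ring)
  -- Lorentz summand basics
  have hexp : (1:ℝ)/s - 1 = α := by rw [hs]; ring
  have hls : ∀ m : ℕ, lorentzSummand s 1 lam m = decRearrange lam m * ((m:ℝ)+1) ^ α := by
    intro m
    rw [lorentzSummand, Real.rpow_one, show (1:ℝ)/s - 1 = α from hexp]
  have h1le : ∀ m : ℕ, (1:ℝ) ≤ ((m:ℝ)+1) ^ α := fun m =>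
    Real.one_le_rpow (le_add_of_nonneg_left (Nat.cast_nonneg m)) hα0
  have hanneg : ∀ m, 0 ≤ decRearrange lam m := decRearrange_nonneg h0
  have hLnneg : ∀ m, 0 ≤ lorentzSummand s 1 lam m := by
    intro m; rw [hls]
    exact mul_nonneg (hanneg m) (le_trans zero_le_one (h1le m))
  have hstar_le : ∀ m, decRearrange lam m ≤ lorentzSummand s 1 lam m := by
    intro m; rw [hls]
    exact le_mul_of_one_le_right (hanneg m) (h1le m)
  have hsum_astar : Summable (decRearrange lam) :=
    Summable.of_nonneg_of_le hanneg hstar_le hsumm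
  -- summability of ‖lam‖
  have hSlam : Summable (fun k => ‖lam k‖) := by
    refine summable_of_sum_le (c := ∑' m, decRearrange lam m) (fun k => norm_nonneg _) (fun F => ?_)
    refine le_trans (sum_compl_le_sum_decRearrange h0 (J := ∅) rfl (by simp) F
      (Finset.disjoint_empty_right F)) ?_
    exact Summable.sum_le_tsum _ (fun i _ => hanneg i) hsum_astar
  set S := ∑' k, ‖lam k‖ with hSdef
  have hS0 : 0 ≤ S := tsum_nonneg (fun k => norm_nonneg _)
  have hK0 : 0 ≤ CU * Mx * M' := mul_nonneg (mul_nonneg hCU0 hMx0) hM'0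
  -- tails
  have hTsum : ∀ n : ℕ, Summable (fun m => lorentzSummand s 1 lam (n + m)) := by
    intro n
    exact ((summable_nat_add_iff n).2 hsumm).congr fun m => by rw [add_comm]
  set T : ℕ → ℝ := fun n => ∑' m, lorentzSummand s 1 lam (n + m) with hTdef
  have hT0 : ∀ n, 0 ≤ T n := fun n => tsum_nonneg (fun m => hLnneg _)
  have hAsum : ∀ n : ℕ, Summable (fun m => decRearrange lam (n + m)) := by
    intro n
    exact ((summable_nat_add_iff n).2 hsum_astar).congr fun m => by rw [add_comm]
  have hTtendsto : Tendsto T atTop (𝓝 0) := by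
    have hpartial := hsumm.hasSum.tendsto_sum_nat
    have heq : ∀ n, T n = (∑' m, lorentzSummand s 1 lam m) -
        ∑ i ∈ Finset.range n, lorentzSummand s 1 lam i := by
      intro n
      have h := Summable.sum_add_tsum_nat_add n hsumm
      have h2 : T n = ∑' m, lorentzSummand s 1 lam (m + n) :=
        tsum_congr fun m => by rw [add_comm]
      rw [h2]; linarith
    have hlim : Tendsto (fun n => (∑' m, lorentzSummand s 1 lam m) -
        ∑ i ∈ Finset.range n, lorentzSummand s 1 lam i) atTop (𝓝 0) := by
      have h3 := (tendsto_const_nhds (x := ∑' m, lorentzSummand s 1 lam m)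
        (f := atTop (α := ℕ))).sub hpartial
      simpa using h3
    exact (tendsto_congr heq).2 hlim
  -- the ε-estimate
  rw [← norm_eq_zero]
  have key : ∀ δ > (0:ℝ), ‖∑' k, lam k * (U (x k)) (x' k)‖ ≤ δ := by
    intro δ hδ
    obtain ⟨n, hn⟩ : ∃ n, (CU * Mx * M' * (1 + C) + 1) * T n ≤ δ / 2 := by
      have hlim : Tendsto (fun n => (CU * Mx * M' * (1 + C) + 1) * T n) atTop (𝓝 0) := by
        simpa using hTtendsto.const_mul (CU * Mx * M' * (1 + C) + 1)
      exact ((hlim.eventually (eventually_le_nhds (by positivity : (0:ℝ) < δ / 2))).exists)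
    set ε := δ / (2 * (CU * Mx * M' * S + 1)) with hεdef
    have hε : 0 < ε := by positivity
    obtain ⟨J, hJcard, hJtop⟩ := exists_top_finset h0 n
    set E := Submodule.span ℂ ((J.image x : Finset X) : Set X) with hEdef
    haveI hEfin : FiniteDimensional ℂ E := FiniteDimensional.span_finset ℂ (J.image x)
    have hdn : Module.finrank ℂ E ≤ n := by
      refine le_trans (finrank_span_finset_le_card (J.image x)) ?_
      rw [← hJcard]; exact Finset.card_image_le
    obtain ⟨R, hRfin, hRnorm, hRapp⟩ := happrox ε hε (Module.finrank ℂ E) E hEfin rfl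
    set p := ((n:ℝ)+1) ^ α with hpdef
    have hp0 : 0 ≤ p := Real.rpow_nonneg (by positivity) α
    have hRn : ‖R‖ ≤ C * p := by
      refine le_trans hRnorm (mul_le_mul_of_nonneg_left ?_ hC.le)
      refine Real.rpow_le_rpow (Nat.cast_nonneg _) ?_ hα0
      exact_mod_cast Nat.le_succ_of_le hdn
    -- summabilities
    have hbound : ∀ (f : ℕ → X) (Mf : ℝ), 0 ≤ Mf → (∀ k, ‖f k‖ ≤ Mf) →
        Summable (fun k => lam k * (U (f k)) (x' k)) := by
      intro f Mf hMf0 hMf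
      refine Summable.of_norm_bounded (g :=
        (fun k => ‖lam k‖ * (CU * Mf * M'))) (hSlam.mul_right _) ?_
      intro k
      rw [norm_mul]
      refine mul_le_mul_of_nonneg_left ?_ (norm_nonneg _)
      refine le_trans ((U (f k)).le_opNorm _) ?_
      refine mul_le_mul ?_ (hM' k) (norm_nonneg _) (mul_nonneg hCU0 hMf0)
      refine le_trans (hCU (f k)) ?_
      exact mul_le_mul_of_nonneg_left (hMf k) hCU0
    have Sg : Summable (fun k => lam k * (U (x k)) (x' k)) := hbound x Mx hMx0 hMx
    have SR : Summable (fun k => lam k * (U (R (x k))) (x' k)) := by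
      refine hbound (fun k => R (x k)) (‖R‖ * Mx) (mul_nonneg (norm_nonneg _) hMx0)
        (fun k => ?_)
      exact le_trans (R.le_opNorm _) (mul_le_mul_of_nonneg_left (hMx k) (norm_nonneg _))
    have hDMx : ∀ k, ‖x k - R (x k)‖ ≤ (1 + C * p) * Mx := by
      intro k
      refine le_trans (norm_sub_le _ _) ?_
      have h1 : ‖R (x k)‖ ≤ (C * p) * Mx := by
        refine le_trans (R.le_opNorm _) (mul_le_mul hRn (hMx k) (norm_nonneg _) ?_)
        positivity
      have h2 := hMx k
      nlinarith
    -- trace against R vanishes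
    have hRzero : ∑' k, lam k * (U (R (x k))) (x' k) = 0 :=
      finrank_trace_zero lam x' x hSlam Mx hMx0 hMx M' hM'0 hM' hzero U R hRfin
    have hsplit : ∑' k, lam k * (U (x k)) (x' k)
        = ∑' k, lam k * (U (x k - R (x k))) (x' k) := by
      rw [eq_comm]
      calc ∑' k, lam k * (U (x k - R (x k))) (x' k)
          = ∑' k, (lam k * (U (x k)) (x' k) - lam k * (U (R (x k))) (x' k)) := by
            refine tsum_congr fun k => ?_
            rw [map_sub, ContinuousLinearMap.sub_apply]
            ring
        _ = ∑' k, lam k * (U (x k)) (x' k) - ∑' k, lam k * (U (R (x k))) (x' k) :=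
            Summable.tsum_sub Sg SR
        _ = ∑' k, lam k * (U (x k)) (x' k) := by rw [hRzero, sub_zero]
    rw [hsplit]
    -- pointwise bound
    have hw : ∀ k, ‖lam k * (U (x k - R (x k))) (x' k)‖
        ≤ ‖lam k‖ * (CU * ‖x k - R (x k)‖ * M') := by
      intro k
      rw [norm_mul]
      refine mul_le_mul_of_nonneg_left ?_ (norm_nonneg _)
      refine le_trans ((U _).le_opNorm _) ?_
      refine mul_le_mul (hCU _) (hM' k) (norm_nonneg _)
        (mul_nonneg hCU0 (norm_nonneg _))
    set w : ℕ → ℝ := fun k => ‖lam k‖ * (CU * ‖x k - R (x k)‖ * M') with hwdef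
    have hw0 : ∀ k, 0 ≤ w k := fun k =>
      mul_nonneg (norm_nonneg _) (mul_nonneg (mul_nonneg hCU0 (norm_nonneg _)) hM'0)
    have hwle : ∀ k, w k ≤ ‖lam k‖ * (CU * ((1 + C * p) * Mx) * M') := by
      intro k
      refine mul_le_mul_of_nonneg_left ?_ (norm_nonneg _)
      refine mul_le_mul_of_nonneg_right ?_ hM'0
      exact mul_le_mul_of_nonneg_left (hDMx k) hCU0
    have hSw : Summable w :=
      Summable.of_nonneg_of_le hw0 hwle (hSlam.mul_right _)
    have hShn : Summable (fun k => ‖lam k * (U (x k - R (x k))) (x' k)‖) :=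
      Summable.of_nonneg_of_le (fun k => norm_nonneg _) hw hSw
    have hnorm1 : ‖∑' k, lam k * (U (x k - R (x k))) (x' k)‖ ≤ ∑' k, w k :=
      le_trans (norm_tsum_le_tsum_norm hShn) (Summable.tsum_le_tsum hw hShn hSw)
    -- split J / complement
    have hsplitw : ∑' k, w k = ∑ k ∈ J, w k + ∑' (k : ↑((↑J : Set ℕ)ᶜ)), w ↑k :=
      (Summable.sum_add_tsum_compl hSw).symm
    -- J part
    have hJpart : ∑ k ∈ J, w k ≤ ε * (CU * Mx * M' * S) := by
      have hterm : ∀ k ∈ J, w k ≤ ‖lam k‖ * (CU * (ε * Mx) * M') := by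
        intro k hk
        have hxE : x k ∈ E := by
          refine Submodule.subset_span ?_
          exact Finset.mem_coe.2 (Finset.mem_image_of_mem x hk)
        have h1 : ‖R (x k) - x k‖ ≤ ε * ‖x k‖ := hRapp (x k) hxE
        have h2 : ‖x k - R (x k)‖ ≤ ε * Mx := by
          rw [norm_sub_rev]
          exact le_trans h1 (mul_le_mul_of_nonneg_left (hMx k) hε.le)
        refine mul_le_mul_of_nonneg_left ?_ (norm_nonneg _)
        refine mul_le_mul_of_nonneg_right ?_ hM'0
        exact mul_le_mul_of_nonneg_left h2 hCU0
      refine le_trans (Finset.sum_le_sum hterm) ?_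
      rw [← Finset.sum_mul]
      have h3 : ∑ k ∈ J, ‖lam k‖ ≤ S :=
        Summable.sum_le_tsum _ (fun i _ => norm_nonneg _) hSlam
      refine le_trans (mul_le_mul_of_nonneg_right h3 (by positivity)) ?_
      exact le_of_eq (by ring)
    -- complement part
    have hApart : ∑' (k : ↑((↑J : Set ℕ)ᶜ)), ‖lam (k : ℕ)‖ ≤ ∑' m, decRearrange lam (n + m) := by
      refine Summable.tsum_le_of_sum_le (hSlam.subtype _) (fun F => ?_)
      have hinj : Function.Injective (fun k : ↑((↑J : Set ℕ)ᶜ) => (k : ℕ)) :=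
        Subtype.val_injective
      have hdisj : Disjoint (F.image (fun k : ↑((↑J : Set ℕ)ᶜ) => (k : ℕ))) J := by
        rw [Finset.disjoint_left]
        intro a ha haJ
        obtain ⟨b, hb, rfl⟩ := Finset.mem_image.1 ha
        exact b.2 (Finset.mem_coe.2 haJ)
      have h := sum_compl_le_sum_decRearrange h0 hJcard hJtop
        (F.image (fun k : ↑((↑J : Set ℕ)ᶜ) => (k : ℕ))) hdisj
      rw [Finset.sum_image (fun a _ b _ hab => hinj hab)] at h
      refine le_trans h ?_
      rw [Finset.sum_Ico_eq_sum_range]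
      simp only [Nat.add_sub_cancel_left]
      exact Summable.sum_le_tsum _ (fun i _ => hanneg _) (hAsum n)
    have hA0 : 0 ≤ ∑' m, decRearrange lam (n + m) := tsum_nonneg (fun m => hanneg _)
    have hA1 : ∑' m, decRearrange lam (n + m) ≤ T n :=
      Summable.tsum_le_tsum (fun m => hstar_le _) (hAsum n) (hTsum n)
    have hA2 : p * ∑' m, decRearrange lam (n + m) ≤ T n := by
      rw [← tsum_mul_left]
      refine Summable.tsum_le_tsum (fun m => ?_) ((hAsum n).mul_left p) (hTsum n)
      rw [hls (n + m), mul_comm]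
      refine mul_le_mul_of_nonneg_left ?_ (hanneg _)
      rw [hpdef]
      refine Real.rpow_le_rpow (by positivity) ?_ hα0
      push_cast
      linarith [Nat.cast_nonneg (α := ℝ) m]
    have hCpart : ∑' (k : ↑((↑J : Set ℕ)ᶜ)), w ↑k
        ≤ CU * ((1 + C * p) * Mx) * M' * ∑' m, decRearrange lam (n + m) := by
      have hb : ∀ k : ↑((↑J : Set ℕ)ᶜ), w ↑k
          ≤ CU * ((1 + C * p) * Mx) * M' * ‖lam (k : ℕ)‖ := by
        intro k
        refine le_trans (hwle ↑k) (le_of_eq (by ring))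
      refine le_trans (Summable.tsum_le_tsum hb (hSw.subtype _) ((hSlam.mul_left _).subtype _)) ?_
      rw [tsum_mul_left]
      exact mul_le_mul_of_nonneg_left hApart (by positivity)
    -- assemble
    have hfinal2 : CU * ((1 + C * p) * Mx) * M' * ∑' m, decRearrange lam (n + m)
        ≤ (CU * Mx * M' * (1 + C) + 1) * T n := by
      have e1 : CU * ((1 + C * p) * Mx) * M' * ∑' m, decRearrange lam (n + m)
          = (CU * Mx * M') * ((∑' m, decRearrange lam (n + m))
            + C * (p * ∑' m, decRearrange lam (n + m))) := by ring
      rw [e1]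
      have e2 : (∑' m, decRearrange lam (n + m))
          + C * (p * ∑' m, decRearrange lam (n + m)) ≤ T n + C * T n :=
        add_le_add hA1 (mul_le_mul_of_nonneg_left hA2 hC.le)
      refine le_trans (mul_le_mul_of_nonneg_left e2 hK0) ?_
      nlinarith [hT0 n]
    have hεpart : ε * (CU * Mx * M' * S) ≤ δ / 2 := by
      rw [hεdef, div_mul_eq_mul_div, div_le_div_iff₀ (by positivity) two_pos]
      nlinarith [mul_nonneg hK0 hS0]
    calc ‖∑' k, lam k * (U (x k - R (x k))) (x' k)‖
        ≤ ∑' k, w k := hnorm1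
      _ = ∑ k ∈ J, w k + ∑' (k : ↑((↑J : Set ℕ)ᶜ)), w ↑k := hsplitw
      _ ≤ ε * (CU * Mx * M' * S) + (CU * Mx * M' * (1 + C) + 1) * T n :=
          add_le_add hJpart (le_trans hCpart hfinal2)
      _ ≤ δ / 2 + δ / 2 := add_le_add hεpart hn
      _ = δ := by ring
  have h2 := le_of_forall_pos_le_add (a := ‖∑' k, lam k * (U (x k)) (x' k)‖) (b := 0)
    (fun e he => by simpa using key e he)
  exact le_antisymm h2 (norm_nonneg _)
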